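/- Let μ and ν be probability measures on ℝ with finite second moments and CDFs F, G. For every coupling (X, Y) of μ and ν, E[|X − Y|²] ≥ ∫₀¹ |F⁻¹(t) − G⁻¹(t)|² dt. Consequently the squared L²-Wasserstein distance between μ and ν equals ∫₀¹ |F⁻¹(t) − G⁻¹(t)|² dt. -/

import Mathlib

open MeasureTheory Set

open MeasureTheory Set Filter ProbabilityTheory


lemma gal (μ : Measure ℝ) [IsProbabilityMeasure μ] {t : ℝ} (ht : t ∈ Ioo (0:ℝ) 1) (x : ℝ) :
    sInf {y : ℝ | t ≤ (μ (Iic y)).toReal} ≤ x ↔ t ≤ (μ (Iic x)).toReal := by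
  have hset : {y : ℝ | t ≤ (μ (Iic y)).toReal} = {y : ℝ | t ≤ cdf μ y} := by
    ext y; simp [cdf_eq_real, measureReal_def]
  rw [hset, show (μ (Iic x)).toReal = cdf μ x from (cdf_eq_real μ x).symm]
  have hmono := monotone_cdf μ
  have hne : {y : ℝ | t ≤ cdf μ y}.Nonempty := by
    obtain ⟨y, hy⟩ := ((tendsto_cdf_atTop μ).eventually_const_lt ht.2).exists
    exact ⟨y, hy.le⟩
  have hbdd : BddBelow {y : ℝ | t ≤ cdf μ y} := by
    obtain ⟨y0, hy0⟩ := ((tendsto_cdf_atBot μ).eventually_lt_const ht.1).exists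
    refine ⟨y0, fun y hy => ?_⟩
    by_contra h
    exact absurd (le_trans hy (hmono (le_of_not_ge h))) (not_le.2 hy0)
  have hmem : t ≤ cdf μ (sInf {y : ℝ | t ≤ cdf μ y}) := by
    set a := sInf {y : ℝ | t ≤ cdf μ y} with ha
    have hrc : Filter.Tendsto (cdf μ) (nhdsWithin a (Ici a)) (nhds (cdf μ a)) :=
      (cdf μ).right_continuous a
    refine ge_of_tendsto (hrc.mono_left (nhdsWithin_mono a Ioi_subset_Ici_self)) ?_
    refine eventually_nhdsWithin_of_forall (fun y hy => ?_)
    obtain ⟨s, hs, hsy⟩ := exists_lt_of_csInf_lt hne hy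
    exact le_trans hs (hmono hsy.le)
  constructor
  · intro h
    exact le_trans hmem (hmono h)
  · intro h
    exact csInf_le hbdd h

lemma qprob : IsProbabilityMeasure (volume.restrict (Ioo (0:ℝ) 1)) := by
  constructor; simp

lemma qmono (μ : Measure ℝ) [IsProbabilityMeasure μ] (Q : ℝ → ℝ)
    (hQ : ∀ t ∈ Ioo (0:ℝ) 1, ∀ x, Q t ≤ x ↔ t ≤ (μ (Iic x)).toReal) :
    MonotoneOn Q (Ioo (0:ℝ) 1) := by
  intro s hs t ht hst
  have h1 : t ≤ (μ (Iic (Q t))).toReal := (hQ t ht (Q t)).mp le_rfl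
  exact (hQ s hs (Q t)).mpr (le_trans hst h1)

lemma qaemeas (μ : Measure ℝ) [IsProbabilityMeasure μ] (Q : ℝ → ℝ)
    (hQ : ∀ t ∈ Ioo (0:ℝ) 1, ∀ x, Q t ≤ x ↔ t ≤ (μ (Iic x)).toReal) :
    AEMeasurable Q (volume.restrict (Ioo (0:ℝ) 1)) :=
  aemeasurable_restrict_of_monotoneOn measurableSet_Ioo (qmono μ Q hQ)

lemma qmap (μ : Measure ℝ) [IsProbabilityMeasure μ] (Q : ℝ → ℝ)
    (hQ : ∀ t ∈ Ioo (0:ℝ) 1, ∀ x, Q t ≤ x ↔ t ≤ (μ (Iic x)).toReal) :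
    (volume.restrict (Ioo (0:ℝ) 1)).map Q = μ := by
  have hc0 : ∀ x, (0:ℝ) ≤ (μ (Iic x)).toReal := fun x => ENNReal.toReal_nonneg
  have hc1 : ∀ x, (μ (Iic x)).toReal ≤ 1 := by
    intro x
    rw [show (1:ℝ) = (μ univ).toReal by simp]
    exact ENNReal.toReal_mono (measure_ne_top _ _) (measure_mono (subset_univ _))
  have hmeas := qaemeas μ Q hQ
  have : IsProbabilityMeasure ((volume.restrict (Ioo (0:ℝ) 1)).map Q) := by
    have := qprob
    exact Measure.isProbabilityMeasure_map hmeas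
  refine Measure.ext_of_Iic _ _ (fun x => ?_)
  rw [Measure.map_apply_of_aemeasurable hmeas measurableSet_Iic,
    Measure.restrict_apply' measurableSet_Ioo]
  have hseteq : Q ⁻¹' (Iic x) ∩ Ioo 0 1 = {t : ℝ | t ≤ (μ (Iic x)).toReal} ∩ Ioo 0 1 := by
    ext t
    simp only [mem_inter_iff, mem_preimage, mem_Iic, mem_setOf_eq, and_congr_left_iff]
    intro ht
    exact hQ t ht x
  rw [hseteq]
  set c := (μ (Iic x)).toReal with hc
  have hμx : μ (Iic x) = ENNReal.ofReal c := by
    rw [hc, ENNReal.ofReal_toReal (measure_ne_top _ _)]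
  rw [hμx]
  rcases lt_or_ge c 1 with h1 | h1
  · have : {t : ℝ | t ≤ c} ∩ Ioo 0 1 = Ioc 0 c := by
      ext t
      simp only [mem_inter_iff, mem_setOf_eq, mem_Ioo, mem_Ioc]
      constructor
      · rintro ⟨h, h0, _⟩; exact ⟨h0, h⟩
      · rintro ⟨h0, h⟩; exact ⟨h, h0, lt_of_le_of_lt h h1⟩
    rw [this, Real.volume_Ioc, sub_zero]
  · have hc1' : c = 1 := le_antisymm (hc1 x) h1
    have : {t : ℝ | t ≤ c} ∩ Ioo 0 1 = Ioo 0 1 := by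
      ext t
      simp only [mem_inter_iff, mem_setOf_eq, mem_Ioo]
      exact ⟨fun h => h.2, fun h => ⟨le_of_lt (hc1' ▸ h.2), h⟩⟩
    rw [this, Real.volume_Ioo, hc1']
    norm_num


noncomputable def gg (a u : ℝ) : ℝ := (Iio a).indicator 1 u - (Iio 0).indicator 1 u

lemma gg_eq (a u : ℝ) : gg a u =
    (Ico 0 a).indicator 1 u - (Ico a 0).indicator 1 u := by
  simp only [gg, indicator_apply, mem_Iio, mem_Ico, Pi.one_apply]
  split_ifs <;> simp_all <;> linarith

lemma gg_abs (a u : ℝ) : |gg a u| =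
    (Ico 0 a).indicator 1 u + (Ico a 0).indicator 1 u := by
  rw [gg_eq]
  simp only [indicator_apply, mem_Ico, Pi.one_apply]
  split_ifs <;> simp_all <;> linarith

lemma integrable_ind (a b : ℝ) : Integrable ((Ico a b).indicator (1 : ℝ → ℝ)) volume := by
  rw [integrable_indicator_iff measurableSet_Ico]
  exact integrableOn_const measure_Ico_lt_top.ne

lemma integrable_gg (a : ℝ) : Integrable (gg a) volume := by
  have : gg a = fun u => (Ico 0 a).indicator 1 u - (Ico a 0).indicator 1 u := funext (gg_eq a)
  rw [this]
  exact (integrable_ind 0 a).sub (integrable_ind a 0)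

lemma integral_ind (a b : ℝ) : ∫ u, (Ico a b).indicator (1 : ℝ → ℝ) u = (b - a) ⊔ 0 := by
  rw [integral_indicator_one measurableSet_Ico, Real.volume_real_Ico]

lemma integral_gg (a : ℝ) : ∫ u, gg a u = a := by
  simp_rw [gg_eq]
  rw [integral_sub (integrable_ind 0 a) (integrable_ind a 0), integral_ind, integral_ind]
  rcases le_total a 0 with h | h
  · rw [max_eq_right (by linarith : a - 0 ≤ 0), max_eq_left (by linarith : (0:ℝ) ≤ 0 - a)]; ring
  · rw [max_eq_left (by linarith : (0:ℝ) ≤ a - 0), max_eq_right (by linarith : 0 - a ≤ 0)]; ring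

lemma integral_abs_gg (a : ℝ) : ∫ u, |gg a u| = |a| := by
  simp_rw [gg_abs]
  rw [integral_add (integrable_ind 0 a) (integrable_ind a 0), integral_ind, integral_ind]
  rcases le_total a 0 with h | h
  · rw [abs_of_nonpos h, max_eq_right (by linarith : a - 0 ≤ 0),
      max_eq_left (by linarith : (0:ℝ) ≤ 0 - a)]; ring
  · rw [abs_of_nonneg h, max_eq_left (by linarith : (0:ℝ) ≤ a - 0),
      max_eq_right (by linarith : 0 - a ≤ 0)]; ring

lemma integrable_abs_gg (a : ℝ) : Integrable (fun u => |gg a u|) volume :=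
  (integrable_gg a).abs

lemma measurable_gg2 : Measurable (fun p : ℝ × ℝ => gg p.1 p.2) := by
  have h1 : (fun p : ℝ × ℝ => gg p.1 p.2) = fun p : ℝ × ℝ =>
      (if p.2 < p.1 then (1:ℝ) else 0) - (if p.2 < 0 then (1:ℝ) else 0) := by
    funext p
    simp [gg, indicator_apply]
  rw [h1]
  exact Measurable.sub
    (Measurable.ite (measurableSet_lt measurable_snd measurable_fst)
      measurable_const measurable_const)
    (Measurable.ite (measurableSet_lt measurable_snd measurable_const)
      measurable_const measurable_const)

lemma measurable_PHI : Measurable (fun q : (ℝ × ℝ) × (ℝ × ℝ) => gg q.1.1 q.2.1 * gg q.1.2 q.2.2) := by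
  exact (measurable_gg2.comp ((measurable_fst.comp measurable_fst).prodMk
    (measurable_fst.comp measurable_snd))).mul
    (measurable_gg2.comp ((measurable_snd.comp measurable_fst).prodMk
    (measurable_snd.comp measurable_snd)))

lemma mul_eq_integral_gg (a b : ℝ) :
    a * b = ∫ w : ℝ × ℝ, gg a w.1 * gg b w.2 := by
  rw [Measure.volume_eq_prod, integral_prod_mul, integral_gg, integral_gg]

lemma gg_swap (a u : ℝ) : gg a u = (Ioi u).indicator 1 a - (Iio 0).indicator 1 u := by
  simp [gg, indicator_apply]

lemma PHI_integrable (π : Measure (ℝ × ℝ)) [IsProbabilityMeasure π]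
    (h1 : Integrable (fun z : ℝ × ℝ => z.1 ^ 2) π)
    (h2 : Integrable (fun z : ℝ × ℝ => z.2 ^ 2) π) :
    Integrable (fun q : (ℝ × ℝ) × (ℝ × ℝ) => gg q.1.1 q.2.1 * gg q.1.2 q.2.2)
      (π.prod (volume : Measure (ℝ × ℝ))) := by
  rw [integrable_prod_iff measurable_PHI.aestronglyMeasurable]
  constructor
  · refine Eventually.of_forall (fun z => ?_)
    rw [Measure.volume_eq_prod]
    exact (integrable_gg z.1).mul_prod (integrable_gg z.2)
  · have heq : (fun z : ℝ × ℝ => ∫ w : ℝ × ℝ, ‖gg z.1 w.1 * gg z.2 w.2‖)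
        = fun z : ℝ × ℝ => |z.1| * |z.2| := by
      funext z
      simp_rw [norm_mul, Real.norm_eq_abs]
      rw [Measure.volume_eq_prod,
        integral_prod_mul (f := fun u => |gg z.1 u|) (g := fun v => |gg z.2 v|),
        integral_abs_gg, integral_abs_gg]
    rw [heq]
    refine Integrable.mono' ((h1.add h2).div_const 2)
      ((measurable_fst.abs.mul measurable_snd.abs).aestronglyMeasurable)
      (Eventually.of_forall fun z => ?_)
    simp only [Pi.add_apply]
    rw [Real.norm_eq_abs, abs_mul, abs_abs, abs_abs]
    nlinarith [sq_nonneg (|z.1| - |z.2|), sq_abs z.1, sq_abs z.2]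

lemma rep (π : Measure (ℝ × ℝ)) [IsProbabilityMeasure π]
    (h1 : Integrable (fun z : ℝ × ℝ => z.1 ^ 2) π)
    (h2 : Integrable (fun z : ℝ × ℝ => z.2 ^ 2) π) :
    ∫ z : ℝ × ℝ, z.1 * z.2 ∂π
      = ∫ w : ℝ × ℝ, (∫ z : ℝ × ℝ, gg z.1 w.1 * gg z.2 w.2 ∂π) := by
  have hswap := integral_integral_swap
    (f := fun (z w : ℝ × ℝ) => gg z.1 w.1 * gg z.2 w.2) (μ := π) (ν := volume)
    (PHI_integrable π h1 h2)
  calc ∫ z : ℝ × ℝ, z.1 * z.2 ∂π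
      = ∫ z : ℝ × ℝ, (∫ w : ℝ × ℝ, gg z.1 w.1 * gg z.2 w.2) ∂π := by
        simp_rw [← mul_eq_integral_gg]
    _ = _ := hswap

lemma ind_bdd (π : Measure (ℝ × ℝ)) [IsProbabilityMeasure π] {f : ℝ × ℝ → ℝ}
    (hf : Measurable f) (hb : ∀ z, ‖f z‖ ≤ 1) : Integrable f π :=
  Integrable.mono' (integrable_const 1) hf.aestronglyMeasurable (Eventually.of_forall hb)

lemma inner_eq (π : Measure (ℝ × ℝ)) [IsProbabilityMeasure π] (u v : ℝ) :
    ∫ z : ℝ × ℝ, gg z.1 u * gg z.2 v ∂π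
      = (π (Ioi u ×ˢ Ioi v)).toReal
        - (Iio (0:ℝ)).indicator 1 v * (π (Ioi u ×ˢ (univ : Set ℝ))).toReal
        - (Iio (0:ℝ)).indicator 1 u * (π ((univ : Set ℝ) ×ˢ Ioi v)).toReal
        + (Iio (0:ℝ)).indicator 1 u * (Iio (0:ℝ)).indicator 1 v := by
  set c1 := (Iio (0:ℝ)).indicator (1 : ℝ → ℝ) u with hc1
  set c2 := (Iio (0:ℝ)).indicator (1 : ℝ → ℝ) v with hc2
  have e1 : ∀ z : ℝ × ℝ, (Ioi u).indicator (1 : ℝ → ℝ) z.1 * (Ioi v).indicator (1 : ℝ → ℝ) z.2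
      = (Ioi u ×ˢ Ioi v).indicator (1 : ℝ × ℝ → ℝ) z := by
    intro z
    simp only [indicator_apply, Set.mem_prod, mem_Ioi, Pi.one_apply]
    split_ifs <;> simp_all
  have e2 : ∀ z : ℝ × ℝ, (Ioi u).indicator (1 : ℝ → ℝ) z.1
      = (Ioi u ×ˢ (univ : Set ℝ)).indicator (1 : ℝ × ℝ → ℝ) z := by
    intro z
    simp only [indicator_apply, Set.mem_prod, mem_Ioi, mem_univ, and_true, Pi.one_apply]
  have e3 : ∀ z : ℝ × ℝ, (Ioi v).indicator (1 : ℝ → ℝ) z.2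
      = ((univ : Set ℝ) ×ˢ Ioi v).indicator (1 : ℝ × ℝ → ℝ) z := by
    intro z
    simp only [indicator_apply, Set.mem_prod, mem_Ioi, mem_univ, true_and, Pi.one_apply]
  have expand : (fun z : ℝ × ℝ => gg z.1 u * gg z.2 v) = fun z : ℝ × ℝ =>
      ((Ioi u ×ˢ Ioi v).indicator (1 : ℝ × ℝ → ℝ) z
        - c2 * (Ioi u ×ˢ (univ : Set ℝ)).indicator (1 : ℝ × ℝ → ℝ) z)
      - (c1 * ((univ : Set ℝ) ×ˢ Ioi v).indicator (1 : ℝ × ℝ → ℝ) z - c1 * c2) := by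
    funext z
    rw [gg_swap, gg_swap, ← e1 z, ← e2 z, ← e3 z, ← hc1, ← hc2]
    ring
  have hms : ∀ (s : Set (ℝ × ℝ)), MeasurableSet s → Integrable (s.indicator (1 : ℝ × ℝ → ℝ)) π := by
    intro s hs
    refine ind_bdd π (measurable_const.indicator hs) (fun z => ?_)
    by_cases h : z ∈ s <;> simp [h]
  have hmAB := hms (Ioi u ×ˢ Ioi v) (measurableSet_Ioi.prod measurableSet_Ioi)
  have hmA := hms (Ioi u ×ˢ (univ : Set ℝ)) (measurableSet_Ioi.prod MeasurableSet.univ)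
  have hmB := hms ((univ : Set ℝ) ×ˢ Ioi v) (MeasurableSet.univ.prod measurableSet_Ioi)
  have hI : Integrable (fun z : ℝ × ℝ => (Ioi u ×ˢ Ioi v).indicator 1 z
      - c2 * (Ioi u ×ˢ (univ : Set ℝ)).indicator 1 z) π := hmAB.sub (hmA.const_mul c2)
  have hII : Integrable (fun z : ℝ × ℝ => c1 * ((univ : Set ℝ) ×ˢ Ioi v).indicator 1 z - c1 * c2) π :=
    (hmB.const_mul c1).sub (integrable_const _)
  rw [expand, integral_sub hI hII,
    integral_sub hmAB (hmA.const_mul c2), integral_sub (hmB.const_mul c1) (integrable_const _),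
    integral_const_mul, integral_const_mul,
    integral_indicator_one (measurableSet_Ioi.prod measurableSet_Ioi),
    integral_indicator_one (measurableSet_Ioi.prod MeasurableSet.univ),
    integral_indicator_one (MeasurableSet.univ.prod measurableSet_Ioi),
    integral_const]
  simp only [measureReal_def, measure_univ, ENNReal.toReal_one, smul_eq_mul, one_mul]
  ring

lemma marg_fst (π : Measure (ℝ × ℝ)) (μ : Measure ℝ) (h : π.map Prod.fst = μ) (u : ℝ) :
    π (Ioi u ×ˢ (univ : Set ℝ)) = μ (Ioi u) := by
  rw [← h, Measure.map_apply measurable_fst measurableSet_Ioi]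
  congr 1
  ext z
  simp [Set.mem_prod]

lemma marg_snd (π : Measure (ℝ × ℝ)) (ν : Measure ℝ) (h : π.map Prod.snd = ν) (v : ℝ) :
    π ((univ : Set ℝ) ×ˢ Ioi v) = ν (Ioi v) := by
  rw [← h, Measure.map_apply measurable_snd measurableSet_Ioi]
  congr 1
  ext z
  simp [Set.mem_prod]

lemma int_fst (π : Measure (ℝ × ℝ)) (μ : Measure ℝ) (h : π.map Prod.fst = μ)
    (hμ2 : Integrable (fun x : ℝ => x ^ 2) μ) :
    Integrable (fun z : ℝ × ℝ => z.1 ^ 2) π := by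
  rw [← h] at hμ2
  exact (integrable_map_measure (by fun_prop) measurable_fst.aemeasurable).mp hμ2

lemma int_snd (π : Measure (ℝ × ℝ)) (ν : Measure ℝ) (h : π.map Prod.snd = ν)
    (hν2 : Integrable (fun x : ℝ => x ^ 2) ν) :
    Integrable (fun z : ℝ × ℝ => z.2 ^ 2) π := by
  rw [← h] at hν2
  exact (integrable_map_measure (by fun_prop) measurable_snd.aemeasurable).mp hν2

lemma mul_cmp (μ ν : Measure ℝ) [IsProbabilityMeasure μ] [IsProbabilityMeasure ν]
    (π π₀ : Measure (ℝ × ℝ)) [IsProbabilityMeasure π] [IsProbabilityMeasure π₀]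
    (hπ1 : π.map Prod.fst = μ) (hπ2 : π.map Prod.snd = ν)
    (h01 : π₀.map Prod.fst = μ) (h02 : π₀.map Prod.snd = ν)
    (hμ2 : Integrable (fun x : ℝ => x ^ 2) μ) (hν2 : Integrable (fun x : ℝ => x ^ 2) ν)
    (hmin : ∀ u v : ℝ, π (Ioi u ×ˢ Ioi v) ≤ π₀ (Ioi u ×ˢ Ioi v)) :
    ∫ z : ℝ × ℝ, z.1 * z.2 ∂π ≤ ∫ z : ℝ × ℝ, z.1 * z.2 ∂π₀ := by
  have m1 := int_fst π μ hπ1 hμ2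
  have m2 := int_snd π ν hπ2 hν2
  have m01 := int_fst π₀ μ h01 hμ2
  have m02 := int_snd π₀ ν h02 hν2
  rw [rep π m1 m2, rep π₀ m01 m02]
  refine integral_mono ((PHI_integrable π m1 m2).integral_prod_right)
    ((PHI_integrable π₀ m01 m02).integral_prod_right) (fun w => ?_)
  simp only
  rw [inner_eq, inner_eq, marg_fst π μ hπ1, marg_fst π₀ μ h01,
    marg_snd π ν hπ2, marg_snd π₀ ν h02]
  have hle : (π (Ioi w.1 ×ˢ Ioi w.2)).toReal ≤ (π₀ (Ioi w.1 ×ˢ Ioi w.2)).toReal :=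
    ENNReal.toReal_mono (measure_ne_top π₀ _) (hmin w.1 w.2)
  linarith

lemma cost_eq (π : Measure (ℝ × ℝ)) [IsProbabilityMeasure π]
    (h1 : Integrable (fun z : ℝ × ℝ => z.1 ^ 2) π)
    (h2 : Integrable (fun z : ℝ × ℝ => z.2 ^ 2) π) :
    ∫ z : ℝ × ℝ, (z.1 - z.2) ^ 2 ∂π
      = ∫ z : ℝ × ℝ, z.1 ^ 2 ∂π + ∫ z : ℝ × ℝ, z.2 ^ 2 ∂π - 2 * ∫ z : ℝ × ℝ, z.1 * z.2 ∂π := by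
  have hmul : Integrable (fun z : ℝ × ℝ => z.1 * z.2) π := by
    refine Integrable.mono' ((h1.add h2).div_const 2)
      ((measurable_fst.mul measurable_snd).aestronglyMeasurable)
      (Eventually.of_forall fun z => ?_)
    simp only [Pi.add_apply]
    rw [Real.norm_eq_abs, abs_mul]
    nlinarith [sq_nonneg (|z.1| - |z.2|), sq_abs z.1, sq_abs z.2]
  have hsum : Integrable (fun z : ℝ × ℝ => z.1 ^ 2 + z.2 ^ 2) π := h1.add h2
  have key : (fun z : ℝ × ℝ => (z.1 - z.2) ^ 2)
      = fun z : ℝ × ℝ => (z.1 ^ 2 + z.2 ^ 2) - 2 * (z.1 * z.2) := by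
    funext z; ring
  rw [key, integral_sub hsum (hmul.const_mul 2), integral_add h1 h2, integral_const_mul]

lemma cost_cmp (μ ν : Measure ℝ) [IsProbabilityMeasure μ] [IsProbabilityMeasure ν]
    (π π₀ : Measure (ℝ × ℝ)) [IsProbabilityMeasure π] [IsProbabilityMeasure π₀]
    (hπ1 : π.map Prod.fst = μ) (hπ2 : π.map Prod.snd = ν)
    (h01 : π₀.map Prod.fst = μ) (h02 : π₀.map Prod.snd = ν)
    (hμ2 : Integrable (fun x : ℝ => x ^ 2) μ) (hν2 : Integrable (fun x : ℝ => x ^ 2) ν)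
    (hmin : ∀ u v : ℝ, π (Ioi u ×ˢ Ioi v) ≤ π₀ (Ioi u ×ˢ Ioi v)) :
    ∫ z : ℝ × ℝ, (z.1 - z.2) ^ 2 ∂π₀ ≤ ∫ z : ℝ × ℝ, (z.1 - z.2) ^ 2 ∂π := by
  have m1 := int_fst π μ hπ1 hμ2
  have m2 := int_snd π ν hπ2 hν2
  have m01 := int_fst π₀ μ h01 hμ2
  have m02 := int_snd π₀ ν h02 hν2
  rw [cost_eq π m1 m2, cost_eq π₀ m01 m02]
  have a1 : ∫ x : ℝ, x ^ 2 ∂(π.map Prod.fst) = ∫ z : ℝ × ℝ, z.1 ^ 2 ∂π :=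
    integral_map measurable_fst.aemeasurable (by fun_prop)
  have a2 : ∫ x : ℝ, x ^ 2 ∂(π₀.map Prod.fst) = ∫ z : ℝ × ℝ, z.1 ^ 2 ∂π₀ :=
    integral_map measurable_fst.aemeasurable (by fun_prop)
  have b1 : ∫ x : ℝ, x ^ 2 ∂(π.map Prod.snd) = ∫ z : ℝ × ℝ, z.2 ^ 2 ∂π :=
    integral_map measurable_snd.aemeasurable (by fun_prop)
  have b2 : ∫ x : ℝ, x ^ 2 ∂(π₀.map Prod.snd) = ∫ z : ℝ × ℝ, z.2 ^ 2 ∂π₀ :=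
    integral_map measurable_snd.aemeasurable (by fun_prop)
  rw [hπ1] at a1; rw [h01] at a2; rw [hπ2] at b1; rw [h02] at b2
  have e1 : ∫ z : ℝ × ℝ, z.1 ^ 2 ∂π = ∫ z : ℝ × ℝ, z.1 ^ 2 ∂π₀ := by rw [← a1, ← a2]
  have e2 : ∫ z : ℝ × ℝ, z.2 ^ 2 ∂π = ∫ z : ℝ × ℝ, z.2 ^ 2 ∂π₀ := by rw [← b1, ← b2]
  have := mul_cmp μ ν π π₀ hπ1 hπ2 h01 h02 hμ2 hν2 hmin
  linarith


theorem stmt_1 (μ ν : Measure ℝ) [IsProbabilityMeasure μ] [IsProbabilityMeasure ν]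
    (hμ2 : Integrable (fun x : ℝ => x ^ 2) μ) (hν2 : Integrable (fun x : ℝ => x ^ 2) ν)
    (F G : ℝ → ℝ)
    (hF : ∀ x, F x = (μ (Iic x)).toReal) (hG : ∀ x, G x = (ν (Iic x)).toReal)
    (Finv Ginv : ℝ → ℝ)
    (hFinv : ∀ t ∈ Ioo (0 : ℝ) 1, Finv t = sInf {x : ℝ | t ≤ F x})
    (hGinv : ∀ t ∈ Ioo (0 : ℝ) 1, Ginv t = sInf {x : ℝ | t ≤ G x}) :
    (∀ (Ω : Type) (_ : MeasurableSpace Ω) (P : Measure Ω), IsProbabilityMeasure P →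
      ∀ (X Y : Ω → ℝ), AEMeasurable X P → AEMeasurable Y P →
        P.map X = μ → P.map Y = ν → Integrable (fun ω => (X ω - Y ω) ^ 2) P →
        ∫ ω, (X ω - Y ω) ^ 2 ∂P ≥ ∫ t in (0 : ℝ)..1, (Finv t - Ginv t) ^ 2) ∧
    sInf {c : ℝ | ∃ π : Measure (ℝ × ℝ),
        π.map Prod.fst = μ ∧ π.map Prod.snd = ν ∧ c = ∫ z, (z.1 - z.2) ^ 2 ∂π} =
      ∫ t in (0 : ℝ)..1, (Finv t - Ginv t) ^ 2 := by
  have hFgal : ∀ t ∈ Ioo (0:ℝ) 1, ∀ x, Finv t ≤ x ↔ t ≤ (μ (Iic x)).toReal := by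
    intro t ht x
    have hsF : {x : ℝ | t ≤ F x} = {y : ℝ | t ≤ (μ (Iic y)).toReal} := by
      ext y; simp only [mem_setOf_eq, hF]
    rw [hFinv t ht, hsF]
    exact gal μ ht x
  have hGgal : ∀ t ∈ Ioo (0:ℝ) 1, ∀ x, Ginv t ≤ x ↔ t ≤ (ν (Iic x)).toReal := by
    intro t ht x
    have hsG : {x : ℝ | t ≤ G x} = {y : ℝ | t ≤ (ν (Iic y)).toReal} := by
      ext y; simp only [mem_setOf_eq, hG]
    rw [hGinv t ht, hsG]
    exact gal ν ht x
  haveI : IsProbabilityMeasure (volume.restrict (Ioo (0:ℝ) 1)) := qprob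
  have aeF := qaemeas μ Finv hFgal
  have aeG := qaemeas ν Ginv hGgal
  have hpair : AEMeasurable (fun t => (Finv t, Ginv t)) (volume.restrict (Ioo (0:ℝ) 1)) :=
    aeF.prodMk aeG
  set π₀ : Measure (ℝ × ℝ) := (volume.restrict (Ioo (0:ℝ) 1)).map (fun t => (Finv t, Ginv t))
    with hπ₀def
  haveI : IsProbabilityMeasure π₀ := Measure.isProbabilityMeasure_map hpair
  have h01 : π₀.map Prod.fst = μ := by
    rw [hπ₀def, AEMeasurable.map_map_of_aemeasurable measurable_fst.aemeasurable hpair]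
    exact qmap μ Finv hFgal
  have h02 : π₀.map Prod.snd = ν := by
    rw [hπ₀def, AEMeasurable.map_map_of_aemeasurable measurable_snd.aemeasurable hpair]
    exact qmap ν Ginv hGgal
  have hub : ∀ (π : Measure (ℝ × ℝ)), IsProbabilityMeasure π →
      π.map Prod.fst = μ → π.map Prod.snd = ν →
      ∀ u v : ℝ, π (Ioi u ×ˢ Ioi v) ≤ π₀ (Ioi u ×ˢ Ioi v) := by
    intro π hπ hπ1 hπ2 u v
    haveI := hπ
    have h0val : π₀ (Ioi u ×ˢ Ioi v)
        = ENNReal.ofReal (1 - max ((μ (Iic u)).toReal) ((ν (Iic v)).toReal)) := by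
      rw [hπ₀def,
        Measure.map_apply_of_aemeasurable hpair (measurableSet_Ioi.prod measurableSet_Ioi),
        Measure.restrict_apply' measurableSet_Ioo]
      have hset : (fun t => (Finv t, Ginv t)) ⁻¹' (Ioi u ×ˢ Ioi v) ∩ Ioo 0 1
          = Ioo (max ((μ (Iic u)).toReal) ((ν (Iic v)).toReal)) 1 := by
        ext t
        simp only [mem_inter_iff, mem_preimage, Set.mem_prod, mem_Ioi, mem_Ioo]
        constructor
        · rintro ⟨⟨h1, h2⟩, h0, h1'⟩
          refine ⟨max_lt ?_ ?_, h1'⟩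
          · exact lt_of_not_ge fun hle =>
              (not_lt.mpr ((hFgal t ⟨h0, h1'⟩ u).mpr hle)) h1
          · exact lt_of_not_ge fun hle =>
              (not_lt.mpr ((hGgal t ⟨h0, h1'⟩ v).mpr hle)) h2
        · rintro ⟨hm, h1'⟩
          have h0 : 0 < t :=
            lt_of_le_of_lt (le_trans ENNReal.toReal_nonneg (le_max_left _ _)) hm
          obtain ⟨hmu, hmv⟩ := max_lt_iff.mp hm
          have hu : u < Finv t := lt_of_not_ge fun hle =>
            (not_lt.mpr ((hFgal t ⟨h0, h1'⟩ u).mp hle)) hmu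
          have hv : v < Ginv t := lt_of_not_ge fun hle =>
            (not_lt.mpr ((hGgal t ⟨h0, h1'⟩ v).mp hle)) hmv
          exact ⟨⟨hu, hv⟩, h0, h1'⟩
      rw [hset, Real.volume_Ioo]
    have hcompl : ∀ (κ : Measure ℝ), IsProbabilityMeasure κ → ∀ x : ℝ,
        κ (Ioi x) = ENNReal.ofReal (1 - (κ (Iic x)).toReal) := by
      intro κ hκ x
      haveI := hκ
      have h1 : κ (Ioi x) = κ univ - κ (Iic x) := by
        rw [← Set.compl_Iic]
        exact measure_compl measurableSet_Iic (measure_ne_top κ _)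
      rw [h1, measure_univ, ENNReal.ofReal_sub _ ENNReal.toReal_nonneg, ENNReal.ofReal_one,
        ENNReal.ofReal_toReal (measure_ne_top κ (Iic x))]
    have hle1 : π (Ioi u ×ˢ Ioi v) ≤ μ (Ioi u) := by
      rw [← marg_fst π μ hπ1 u]
      exact measure_mono (Set.prod_mono subset_rfl (subset_univ _))
    have hle2 : π (Ioi u ×ˢ Ioi v) ≤ ν (Ioi v) := by
      rw [← marg_snd π ν hπ2 v]
      exact measure_mono (Set.prod_mono (subset_univ _) subset_rfl)
    rw [h0val]
    rcases le_total ((μ (Iic u)).toReal) ((ν (Iic v)).toReal) with hc | hc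
    · rw [max_eq_right hc, ← hcompl ν inferInstance v]; exact hle2
    · rw [max_eq_left hc, ← hcompl μ inferInstance u]; exact hle1
  have hcost0 : ∫ z : ℝ × ℝ, (z.1 - z.2) ^ 2 ∂π₀ = ∫ t in (0:ℝ)..1, (Finv t - Ginv t) ^ 2 := by
    have h1 : ∫ z : ℝ × ℝ, (z.1 - z.2) ^ 2 ∂π₀
        = ∫ t in Ioo (0:ℝ) 1, (Finv t - Ginv t) ^ 2 :=
      integral_map hpair
        (((measurable_fst.sub measurable_snd).pow_const 2).aestronglyMeasurable)
    rw [h1, intervalIntegral.integral_of_le zero_le_one, integral_Ioc_eq_integral_Ioo]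
  have master : ∀ (π : Measure (ℝ × ℝ)), IsProbabilityMeasure π →
      π.map Prod.fst = μ → π.map Prod.snd = ν →
      (∫ t in (0:ℝ)..1, (Finv t - Ginv t) ^ 2) ≤ ∫ z : ℝ × ℝ, (z.1 - z.2) ^ 2 ∂π := by
    intro π hπ h1 h2
    haveI := hπ
    rw [← hcost0]
    exact cost_cmp μ ν π π₀ h1 h2 h01 h02 hμ2 hν2 (hub π hπ h1 h2)
  constructor
  · intro Ω mΩ P hP X Y hX hY hmX hmY _
    haveI := hP
    have hp : AEMeasurable (fun ω => (X ω, Y ω)) P := hX.prodMk hY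
    haveI : IsProbabilityMeasure (P.map (fun ω => (X ω, Y ω))) := Measure.isProbabilityMeasure_map hp
    have hm1 : (P.map (fun ω => (X ω, Y ω))).map Prod.fst = μ := by
      rw [AEMeasurable.map_map_of_aemeasurable measurable_fst.aemeasurable hp]
      exact hmX
    have hm2 : (P.map (fun ω => (X ω, Y ω))).map Prod.snd = ν := by
      rw [AEMeasurable.map_map_of_aemeasurable measurable_snd.aemeasurable hp]
      exact hmY
    have hcost : ∫ z : ℝ × ℝ, (z.1 - z.2) ^ 2 ∂(P.map (fun ω => (X ω, Y ω)))
        = ∫ ω, (X ω - Y ω) ^ 2 ∂P := integral_map hp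
      (((measurable_fst.sub measurable_snd).pow_const 2).aestronglyMeasurable)
    have hfin := master _ inferInstance hm1 hm2
    rw [hcost] at hfin
    exact hfin
  · have hmem : (∫ t in (0:ℝ)..1, (Finv t - Ginv t) ^ 2) ∈ {c : ℝ | ∃ π : Measure (ℝ × ℝ),
        π.map Prod.fst = μ ∧ π.map Prod.snd = ν ∧ c = ∫ z, (z.1 - z.2) ^ 2 ∂π} :=
      ⟨π₀, h01, h02, hcost0.symm⟩
    have hlb : ∀ c ∈ {c : ℝ | ∃ π : Measure (ℝ × ℝ),
        π.map Prod.fst = μ ∧ π.map Prod.snd = ν ∧ c = ∫ z, (z.1 - z.2) ^ 2 ∂π},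
        (∫ t in (0:ℝ)..1, (Finv t - Ginv t) ^ 2) ≤ c := by
      rintro c ⟨π, h1, h2, rfl⟩
      haveI : IsProbabilityMeasure π := by
        constructor
        have huniv : π.map Prod.fst univ = π univ := by
          rw [Measure.map_apply measurable_fst MeasurableSet.univ, Set.preimage_univ]
        rw [← huniv, h1]
        exact measure_univ
      exact master π inferInstance h1 h2
    exact le_antisymm (csInf_le ⟨_, hlb⟩ hmem) (le_csInf ⟨_, hmem⟩ hlb)
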